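/- Let p be an odd prime, r = p^m, q = r², let 1 ≤ l ≤ m and d = gcd(l, m). Then for every odd integer k with 1 ≤ k ≤ p^d, the number k·p^l + 1 belongs to Σ(eg, q). -/

import Mathlib

open Finset

/-- Δ_S(a) = ∏_{b ∈ S, b ≠ a} (a − b). -/
def deltaS {F : Type*} [Field F] [DecidableEq F] (S : Finset F) (a : F) : F :=
  ∏ b ∈ S.erase a, (a - b)

/-- n ∈ Σ(eg,q): n is even, n ≥ 2, and there is S ⊆ F_q with |S| = n − 1 such that
η_q(−Δ_S(a)) = 1, i.e. −Δ_S(a) is a square, for all a ∈ S. -/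
def SigmaEG (F : Type*) [Field F] [DecidableEq F] (n : ℕ) : Prop :=
  Even n ∧ 2 ≤ n ∧ ∃ S : Finset F, S.card = n - 1 ∧
    ∀ a ∈ S, IsSquare (-(deltaS S a))

section Aux

variable {F : Type*} [Field F] [Fintype F] [DecidableEq F]

lemma aux_ord {n : ℕ} (hn : 0 < n) (hd : n ∣ Fintype.card F - 1) :
    ∃ u : Fˣ, orderOf u = n := by
  obtain ⟨g, hg⟩ := IsCyclic.exists_generator (α := Fˣ)
  have hog : orderOf g = Fintype.card F - 1 := by
    rw [orderOf_eq_card_of_forall_mem_zpowers hg, Nat.card_eq_fintype_card, Fintype.card_units]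
  have hc0 : Fintype.card F - 1 ≠ 0 := by
    have : 1 < Fintype.card F := Fintype.one_lt_card
    omega
  have hle : n ≤ Fintype.card F - 1 := Nat.le_of_dvd (Nat.pos_of_ne_zero hc0) hd
  have hdiv_ne : (Fintype.card F - 1) / n ≠ 0 := (Nat.div_pos hle hn).ne'
  refine ⟨g ^ ((Fintype.card F - 1) / n), ?_⟩
  rw [orderOf_pow_of_dvd hdiv_ne (by rw [hog]; exact Nat.div_dvd_of_dvd hd), hog,
    Nat.div_div_self hd hc0]

lemma aux_roots {n : ℕ} (hn : 0 < n) (hd : n ∣ Fintype.card F - 1) :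
    n ≤ (univ.filter fun x : F => x ^ n = 1).card := by
  obtain ⟨u, hu⟩ := aux_ord hn hd
  have hinj : Set.InjOn (fun i => ((u : F)) ^ i) ↑(range n) := by
    intro i hi j hj hij
    have h2 : u ^ i = u ^ j := Units.ext (by push_cast; exact hij)
    exact pow_injOn_Iio_orderOf (by simpa [hu] using hi) (by simpa [hu] using hj) h2
  calc n = (range n).card := (card_range n).symm
    _ = ((range n).image fun i => (u : F) ^ i).card := (card_image_of_injOn hinj).symm
    _ ≤ _ := by
        apply card_le_card
        intro x hx
        obtain ⟨i, _, rfl⟩ := mem_image.mp hx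
        simp only [mem_filter, mem_univ, true_and]
        have : (u : F) ^ n = 1 := by
          have h1 : u ^ n = 1 := by rw [← hu]; exact pow_orderOf_eq_one u
          calc (u : F) ^ n = ((u ^ n : Fˣ) : F) := by push_cast; ring
            _ = 1 := by rw [h1]; rfl
        rw [← pow_mul, mul_comm, pow_mul, this, one_pow]

lemma aux_count {n : ℕ} (hn : 2 ≤ n) (hd : n - 1 ∣ Fintype.card F - 1) :
    n ≤ (univ.filter fun x : F => x ^ n = x).card := by
  have h1 : 0 < n - 1 := by omega
  have hroots := aux_roots h1 hd
  have hsub : insert (0 : F) (univ.filter fun x : F => x ^ (n - 1) = 1) ⊆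
      univ.filter fun x : F => x ^ n = x := by
    intro x hx
    rcases mem_insert.mp hx with rfl | hx
    · simp only [mem_filter, mem_univ, true_and]
      rw [zero_pow (by omega : n ≠ 0)]
    · have hx1 := (mem_filter.mp hx).2
      simp only [mem_filter, mem_univ, true_and]
      have h2 : x ^ n = x ^ (n - 1) * x := by rw [← pow_succ]; congr 1; omega
      rw [h2, hx1, one_mul]
  have h0 : (0 : F) ∉ (univ.filter fun x : F => x ^ (n - 1) = 1) := by
    simp [zero_pow (show n - 1 ≠ 0 by omega)]
  calc n = (n - 1) + 1 := by omega
    _ ≤ (univ.filter fun x : F => x ^ (n - 1) = 1).card + 1 := by omega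
    _ = (insert (0 : F) (univ.filter fun x : F => x ^ (n - 1) = 1)).card :=
        (card_insert_of_notMem h0).symm
    _ ≤ _ := card_le_card hsub

lemma aux_theta {n : ℕ} (hn : 0 < n) (hd : 2 * n ∣ Fintype.card F - 1) :
    ∃ θ : F, θ ^ n = -1 := by
  obtain ⟨u, hu⟩ := aux_ord (by omega) hd
  refine ⟨(u : F), ?_⟩
  have h2 : (u : F) ^ n * ((u : F) ^ n) = 1 := by
    have h1 : u ^ (2 * n) = 1 := by rw [← hu]; exact pow_orderOf_eq_one u
    have : (u : F) ^ (2 * n) = 1 := by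
      calc (u : F) ^ (2 * n) = ((u ^ (2 * n) : Fˣ) : F) := by push_cast; ring
        _ = 1 := by rw [h1]; rfl
    calc (u : F) ^ n * (u : F) ^ n = (u : F) ^ (2 * n) := by rw [← pow_add]; congr 1; omega
      _ = 1 := this
  have hne : (u : F) ^ n ≠ 1 := by
    intro h
    have h3 : u ^ n = 1 := Units.ext (by push_cast; exact h)
    have h4 := orderOf_dvd_of_pow_eq_one h3
    rw [hu] at h4
    have := Nat.le_of_dvd hn h4
    omega
  rcases mul_self_eq_one_iff.mp h2 with h | h
  · exact absurd h hne
  · exact h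

lemma aux_iter {M : Type*} [Monoid M] (p : ℕ) {d m : ℕ} (hdm : d ∣ m) {x : M}
    (h : x ^ p ^ d = x) : x ^ p ^ m = x := by
  obtain ⟨s, rfl⟩ := hdm
  induction s with
  | zero => simp
  | succ s ih =>
    have he : p ^ (d * (s + 1)) = p ^ (d * s) * p ^ d := by rw [Nat.mul_succ, pow_add]
    rw [he, pow_mul, ih, h]

lemma aux_char {p n : ℕ} (hp : p.Prime) (hn : 0 < n)
    (hF : Fintype.card F = p ^ n) : ringChar F = p := by
  have hcast : (p : F) = 0 := by
    have h0 := FiniteField.cast_card_eq_zero F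
    rw [hF] at h0
    push_cast at h0
    exact pow_eq_zero_iff (by omega) |>.mp h0
  have hdvd : ringChar F ∣ p := ringChar.dvd hcast
  rcases (Nat.dvd_prime hp).mp hdvd with h1 | h1
  · exact absurd h1 CharP.ringChar_ne_one
  · exact h1

lemma aux_sq {p m : ℕ} (hp : p.Prime) (hodd : p ≠ 2) (hm : 0 < m)
    (hF : Fintype.card F = (p ^ m) ^ 2) {x : F} (hx : x ^ p ^ m = x) : IsSquare x := by
  rcases eq_or_ne x 0 with rfl | hx0
  · exact ⟨0, (mul_zero 0).symm⟩
  have hcard : Fintype.card F = p ^ (2 * m) := by rw [hF, ← pow_mul, mul_comm]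
  have hchar : ringChar F = p := aux_char hp (by omega) hcard
  have hne2 : ringChar F ≠ 2 := by rw [hchar]; exact hodd
  rw [FiniteField.isSquare_iff hne2 hx0]
  have hr1 : x ^ (p ^ m - 1) = 1 := by
    have hr0 : 0 < p ^ m := pow_pos hp.pos m
    have h1 : x ^ (p ^ m - 1) * x = x := by
      rw [← pow_succ]
      have : p ^ m - 1 + 1 = p ^ m := by omega
      rw [this, hx]
    have h2 : x ^ (p ^ m - 1) * x = 1 * x := by rw [h1, one_mul]
    exact mul_right_cancel₀ hx0 h2
  obtain ⟨s, hs⟩ := (hp.odd_of_ne_two hodd).pow (n := m)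
  have hdiv : (p ^ m) ^ 2 / 2 = (p ^ m - 1) * ((p ^ m + 1) / 2) := by
    calc (p ^ m) ^ 2 / 2 = (2 * (2 * s * s + 2 * s) + 1) / 2 := by rw [hs]; congr 1; ring
      _ = 2 * s * s + 2 * s := by omega
      _ = 2 * s * (s + 1) := by ring
      _ = (p ^ m - 1) * ((p ^ m + 1) / 2) := by
          rw [hs]
          have h1 : 2 * s + 1 - 1 = 2 * s := by omega
          have h2 : (2 * s + 1 + 1) / 2 = s + 1 := by omega
          rw [h1, h2]
  rw [hF, hdiv, pow_mul, hr1, one_pow]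

end Aux


theorem stmt_7 (p m l : ℕ) (hp : p.Prime) (hodd : p ≠ 2) (hm : 0 < m)
    (hl1 : 1 ≤ l) (hl2 : l ≤ m)
    (r : ℕ) (hr : r = p ^ m)
    (F : Type*) [Field F] [Fintype F] [DecidableEq F] (hF : Fintype.card F = r ^ 2)
    (k : ℕ) (hko : Odd k) (hk1 : 1 ≤ k) (hk2 : k ≤ p ^ Nat.gcd l m) :
    SigmaEG F (k * p ^ l + 1) := by
  classical
  subst hr
  haveI hfact : Fact p.Prime := ⟨hp⟩
  have hp1 : 1 < p := hp.one_lt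
  have hr0 : 0 < p ^ m := pow_pos hp.pos m
  have hr2 : 2 ≤ p ^ m := by
    calc 2 ≤ p := hp1
      _ = p ^ 1 := (pow_one p).symm
      _ ≤ p ^ m := Nat.pow_le_pow_right hp.pos hm
  have hpodd : Odd p := hp.odd_of_ne_two hodd
  have hrodd : Odd (p ^ m) := hpodd.pow
  have hcardF : Fintype.card F = p ^ (2 * m) := by rw [hF, ← pow_mul, mul_comm]
  have hchar : ringChar F = p := aux_char hp (by omega) hcardF
  haveI : CharP F p := ringChar.of_eq hchar
  have hp2 : (2 : F) ≠ 0 := by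
    intro h
    have h1 : p ∣ 2 := (CharP.cast_eq_zero_iff F p 2).mp h
    have := (Nat.prime_dvd_prime_iff_eq hp Nat.prime_two).mp h1
    exact hodd this
  have hq : ∀ x : F, (x ^ p ^ m) ^ p ^ m = x := by
    intro x
    have h1 := FiniteField.pow_card x
    rw [hF] at h1
    rw [← pow_mul, ← pow_two]
    exact h1
  have hinj : Function.Injective (fun x : F => x ^ p ^ m) := by
    intro x y hxy
    simp only at hxy
    calc x = (x ^ p ^ m) ^ p ^ m := (hq x).symm
      _ = (y ^ p ^ m) ^ p ^ m := by rw [hxy]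
      _ = y := hq y
  have hadd : ∀ x y : F, (x + y) ^ p ^ m = x ^ p ^ m + y ^ p ^ m := fun x y =>
    add_pow_char_pow ..
  have hneg : ∀ x : F, (-x) ^ p ^ m = -(x ^ p ^ m) := fun x => hrodd.neg_pow x
  have hsubpow : ∀ x y : F, (x - y) ^ p ^ m = x ^ p ^ m - y ^ p ^ m := by
    intro x y
    rw [sub_eq_add_neg, hadd, hneg, ← sub_eq_add_neg]
  set d := Nat.gcd l m with hd
  have hd1 : 0 < d := Nat.gcd_pos_of_pos_left m (by omega)
  have hdm : d ∣ m := Nat.gcd_dvd_right l m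
  -- the set D of elements of the subfield of size p^d
  have hDcard : p ^ d ≤ (univ.filter fun x : F => x ^ p ^ d = x).card := by
    apply aux_count
    · calc 2 ≤ p := hp1
        _ = p ^ 1 := (pow_one p).symm
        _ ≤ p ^ d := Nat.pow_le_pow_right hp.pos hd1
    · rw [hcardF]
      obtain ⟨s, hs⟩ := hdm
      have h1 : (p ^ d - 1) ∣ (p ^ d) ^ (2 * s) - 1 ^ (2 * s) :=
        Nat.sub_dvd_pow_sub_pow _ _ _
      have h2 : (p ^ d) ^ (2 * s) = p ^ (2 * m) := by
        rw [← pow_mul, hs]; congr 1; ring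
      rwa [h2, one_pow] at h1
  obtain ⟨T, hTsub, hTcard⟩ := Finset.exists_subset_card_eq (s := (univ.filter fun x : F => x ^ p ^ d = x)) (n := k)
    (le_trans (le_trans hk2 (le_refl _)) hDcard)
  have hTmem : ∀ t ∈ T, t ^ p ^ m = t := by
    intro t ht
    have := (mem_filter.mp (hTsub ht)).2
    exact aux_iter p hdm this
  -- the additive subgroup E = {x | x^r = -x}
  set E : AddSubgroup F :=
    { carrier := {x : F | x ^ p ^ m = -x}
      add_mem' := by
        intro a b ha hb
        simp only [Set.mem_setOf_eq] at *
        rw [hadd, ha, hb, neg_add]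
      zero_mem' := by
        simp only [Set.mem_setOf_eq]
        rw [zero_pow (by omega : p ^ m ≠ 0), neg_zero]
      neg_mem' := by
        intro a ha
        simp only [Set.mem_setOf_eq] at *
        rw [hneg, ha, neg_neg] } with hE
  have hEmemiff : ∀ x : F, x ∈ E ↔ x ^ p ^ m = -x := fun x => Iff.rfl
  have hEfin : Nat.card E = (univ.filter fun x : F => x ^ p ^ m = -x).card := by
    rw [Nat.card_eq_fintype_card, Fintype.card_subtype]
    congr 1
    apply filter_congr
    intro x _
    simp [hEmemiff]
  -- lower bound on card of E via θ
  have hdvdθ : 2 * (p ^ m - 1) ∣ Fintype.card F - 1 := by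
    rw [hF]
    obtain ⟨s, hs⟩ := hrodd
    refine ⟨s + 1, ?_⟩
    have h1 : (p ^ m) ^ 2 = (2 * (2 * s * s + 2 * s) + 1) := by rw [hs]; ring
    rw [h1, hs]
    have h2 : 2 * s + 1 - 1 = 2 * s := by omega
    rw [h2]
    have : 2 * (2 * s * s + 2 * s) + 1 - 1 = 2 * (2 * s) * (s + 1) := by
      have h3 : 2 * (2 * s) * (s + 1) = 2 * (2 * s * s + 2 * s) := by ring
      omega
    rw [this]
  obtain ⟨θ, hθ⟩ := aux_theta (n := p ^ m - 1) (by omega) hdvdθ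
  have hθ0 : θ ≠ 0 := by
    intro h
    rw [h, zero_pow (by omega : p ^ m - 1 ≠ 0)] at hθ
    exact one_ne_zero (neg_eq_zero.mp hθ.symm)
  have hθpow : θ ^ p ^ m = -θ := by
    have h1 : θ ^ p ^ m = θ ^ (p ^ m - 1) * θ := by
      rw [← pow_succ]; congr 1; omega
    rw [h1, hθ, neg_one_mul]
  have hRcard : p ^ m ≤ (univ.filter fun x : F => x ^ p ^ m = x).card := by
    apply aux_count hr2
    rw [hcardF]
    have h1 : (p ^ m - 1) ∣ (p ^ m) ^ 2 - 1 ^ 2 := Nat.sub_dvd_pow_sub_pow _ _ _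
    have h2 : (p ^ m) ^ 2 = p ^ (2 * m) := by rw [← pow_mul]; congr 1; ring
    rwa [h2, one_pow] at h1
  have hEcard_ge : p ^ m ≤ Nat.card E := by
    rw [hEfin]
    have himgsub : ((univ.filter fun x : F => x ^ p ^ m = x).image fun x => θ * x) ⊆
        univ.filter fun x : F => x ^ p ^ m = -x := by
      intro y hy
      obtain ⟨x, hx, rfl⟩ := mem_image.mp hy
      have hx' := (mem_filter.mp hx).2
      simp only [mem_filter, mem_univ, true_and]
      rw [mul_pow, hx', hθpow, neg_mul]
    calc p ^ m ≤ (univ.filter fun x : F => x ^ p ^ m = x).card := hRcard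
      _ = ((univ.filter fun x : F => x ^ p ^ m = x).image fun x => θ * x).card :=
          (card_image_of_injective _ (mul_right_injective₀ hθ0)).symm
      _ ≤ _ := card_le_card himgsub
  have hEdvd : p ^ l ∣ Nat.card E := by
    have hdvdF : Nat.card E ∣ p ^ (2 * m) := by
      have h1 := AddSubgroup.card_addSubgroup_dvd_card E
      rwa [Nat.card_eq_fintype_card (α := F), hcardF] at h1
    obtain ⟨j, hjle, hj⟩ := (Nat.dvd_prime_pow hp).mp hdvdF
    rw [hj]
    apply pow_dvd_pow
    have h2 : p ^ m ≤ p ^ j := hj ▸ hEcard_ge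
    have h3 : m ≤ j := (Nat.pow_le_pow_iff_right hp1).mp h2
    omega
  -- Sylow: a subgroup of E of cardinality p^l
  obtain ⟨K, hK⟩ := Sylow.exists_subgroup_card_pow_prime (G := Multiplicative E) p
    (n := l) hEdvd
  haveI : Fintype K := Fintype.ofFinite _
  set ι : K → F := fun x => ((Multiplicative.toAdd (x : Multiplicative E) : E) : F) with hι
  have hιinj : Function.Injective ι := by
    intro x y hxy
    apply Subtype.ext
    apply Multiplicative.toAdd.injective
    exact Subtype.ext hxy
  set Hs : Finset F := (univ : Finset K).image ι with hHs
  have hHcard : Hs.card = p ^ l := by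
    rw [hHs, card_image_of_injective _ hιinj, card_univ, ← Nat.card_eq_fintype_card, hK]
  have hHmem : ∀ h ∈ Hs, h ^ p ^ m = -h := by
    intro h hh
    obtain ⟨x, _, rfl⟩ := mem_image.mp hh
    exact (Multiplicative.toAdd (x : Multiplicative E)).2
  have hHsub : ∀ a ∈ Hs, ∀ b ∈ Hs, a - b ∈ Hs := by
    intro a ha b hb
    obtain ⟨x, _, rfl⟩ := mem_image.mp ha
    obtain ⟨y, _, rfl⟩ := mem_image.mp hb
    refine mem_image.mpr ⟨x * y⁻¹, mem_univ _, ?_⟩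
    show ((Multiplicative.toAdd ((x * y⁻¹ : K) : Multiplicative E) : E) : F) = ι x - ι y
    rw [Subgroup.coe_mul, Subgroup.coe_inv]
    rw [toAdd_mul, toAdd_inv]
    push_cast
    rw [sub_eq_add_neg]
  -- the set S
  have hinjS : Set.InjOn (fun z : F × F => z.1 + z.2) ↑(T ×ˢ Hs) := by
    rintro ⟨t, h⟩ hth ⟨t', h'⟩ hth' heq
    simp only [coe_product, Set.mem_prod, mem_coe] at hth hth'
    simp only at heq
    have hx : t - t' = h' - h := by linear_combination heq
    have h1 : (t - t') ^ p ^ m = t - t' := by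
      rw [hsubpow, hTmem _ hth.1, hTmem _ hth'.1]
    have h2 : h' - h ∈ Hs := hHsub _ hth'.2 _ hth.2
    have h3 : (t - t') ^ p ^ m = -(t - t') := by rw [hx]; exact hHmem _ h2
    have h4 : t = t' := by
      have h5 : (2 : F) * (t - t') = 0 := by
        have h6 : t - t' = -(t - t') := h1.symm.trans h3
        linear_combination h6
      rcases mul_eq_zero.mp h5 with h6 | h6
      · exact absurd h6 hp2
      · exact sub_eq_zero.mp h6
    refine Prod.ext h4 ?_
    simp only
    rw [h4] at heq
    exact add_left_cancel heq
  set S : Finset F := (T ×ˢ Hs).image (fun z : F × F => z.1 + z.2) with hS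
  have hScard : S.card = k * p ^ l := by
    rw [hS, card_image_of_injOn hinjS, card_product, hTcard, hHcard]
  refine ⟨?_, ?_, S, ?_, ?_⟩
  · have h1 : Odd (k * p ^ l) := hko.mul (hpodd.pow)
    exact h1.add_one
  · have h1 : 0 < k * p ^ l := Nat.mul_pos (by omega) (pow_pos hp.pos l)
    omega
  · rw [hScard]; omega
  · intro a ha
    obtain ⟨⟨t₀, h₀⟩, hmem, rfl⟩ := mem_image.mp ha
    have ht₀ : t₀ ∈ T := (mem_product.mp hmem).1
    have hh₀ : h₀ ∈ Hs := (mem_product.mp hmem).2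
    simp only
    have hapow : (t₀ + h₀) ^ p ^ m = t₀ - h₀ := by
      rw [hadd, hTmem _ ht₀, hHmem _ hh₀, ← sub_eq_add_neg]
    have hkey : (deltaS S (t₀ + h₀)) ^ p ^ m = deltaS S (t₀ + h₀) := by
      set a := t₀ + h₀ with ha'
      set s := S.erase a with hs'
      set g : F → F := fun x => a - a ^ p ^ m + x ^ p ^ m with hg
      have hginj : Set.InjOn g ↑s := by
        intro x _ y _ hxy
        apply hinj
        simp only [hg] at hxy
        show x ^ p ^ m = y ^ p ^ m
        linear_combination hxy
      have hgmaps : ∀ b ∈ s, g b ∈ s := by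
        intro b hb
        obtain ⟨hbne, hbS⟩ := mem_erase.mp hb
        obtain ⟨⟨t, h⟩, htp, rfl⟩ := mem_image.mp hbS
        have ht : t ∈ T := (mem_product.mp htp).1
        have hh : h ∈ Hs := (mem_product.mp htp).2
        simp only at hbne ⊢
        refine mem_erase.mpr ⟨?_, ?_⟩
        · intro hcon
          apply hbne
          apply hinj
          show (t + h) ^ p ^ m = a ^ p ^ m
          simp only [hg] at hcon
          linear_combination hcon
        · refine mem_image.mpr ⟨(t, h₀ - (h - h₀)),
            mem_product.mpr ⟨ht, hHsub _ hh₀ _ (hHsub _ hh _ hh₀)⟩, ?_⟩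
          have hb2 : (t + h) ^ p ^ m = t - h := by
            rw [hadd, hTmem _ ht, hHmem _ hh, ← sub_eq_add_neg]
          simp only [hg]
          rw [hb2, hapow]
          show t + (h₀ - (h - h₀)) = a - (t₀ - h₀) + (t - h)
          rw [ha']
          ring
      have himg2 : s.image g = s := by
        apply Finset.eq_of_subset_of_card_le
        · intro x hx
          obtain ⟨b, hb, rfl⟩ := mem_image.mp hx
          exact hgmaps b hb
        · rw [card_image_of_injOn hginj]
      calc (deltaS S a) ^ p ^ m = ∏ b ∈ s, (a - b) ^ p ^ m := by
            rw [deltaS, ← prod_pow]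
        _ = ∏ b ∈ s, (a - g b) := by
            refine prod_congr rfl fun b hb => ?_
            rw [hsubpow]
            simp only [hg]
            rw [hapow]
            ring
        _ = ∏ c ∈ s.image g, (a - c) := (prod_image (fun x hx y hy hxy => hginj hx hy hxy)).symm
        _ = deltaS S a := by rw [himg2, deltaS]
    have hkey2 : (-(deltaS S (t₀ + h₀))) ^ p ^ m = -(deltaS S (t₀ + h₀)) := by
      rw [hneg, hkey]
    exact aux_sq hp hodd hm hF hkey2
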